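/- For every n ∈ ℕ and every x ∈ ℝ there exist a probability space (Ω, 𝒜, μ), a filtration (ℱ_k) on it, and a real-valued martingale (M_k) with respect to (ℱ_k) and μ with M_0 = 0 almost surely and |M_{k+1} − M_k| ≤ 1 almost surely for all k, such that μ{ω : ∃ k with 0 ≤ k ≤ n and M_k(ω) ≥ x} = D_n(x). In particular the supremum of μ{∃ k ≤ n, M_k ≥ x} over all such martingales equals D_n(x). -/

import Mathlib

open Classical in
/-- The recursively defined functions `D n : ℝ → ℝ`. -/
noncomputable def D : ℕ → ℝ → ℝ
  | 0, x => if x ≤ 0 then 1 else 0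
  | n + 1, x =>
    if x ≤ 0 then 1
    else if ((n : ℝ) + 1) < x then 0
    else if ∃ m : ℤ, x = (m : ℝ) then
      (1 / 2) * D n (x - 1) + (1 / 2) * D n (x + 1)
    else if Odd n ∧ x < 1 then
      (1 - x) * D n 0 + x * D n 1
    else if Even (⌊x⌋ + (n : ℤ)) then
      (1 / (1 + Int.fract x)) * D n (⌊x⌋ : ℝ)
        + (Int.fract x / (1 + Int.fract x)) * D n (x + 1)
    else
      ((1 - Int.fract x) / (2 - Int.fract x)) * D n (x - 1)
        + (1 / (2 - Int.fract x)) * D n (⌈x⌉ : ℝ)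

open MeasureTheory

namespace MGAux


open Classical in
noncomputable def stepP (m : ℕ) (d : ℝ) : ℝ :=
  if d ≤ 0 then 1
  else if ((m : ℝ) + 1) < d then 1
  else if ∃ z : ℤ, d = (z : ℝ) then 1 / 2
  else if Odd m ∧ d < 1 then 1 - d
  else if Even (⌊d⌋ + (m : ℤ)) then 1 / (1 + Int.fract d)
  else (1 - Int.fract d) / (2 - Int.fract d)

open Classical in
noncomputable def stepA (m : ℕ) (d : ℝ) : ℝ :=
  if d ≤ 0 then d
  else if ((m : ℝ) + 1) < d then d
  else if ∃ z : ℤ, d = (z : ℝ) then d - 1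
  else if Odd m ∧ d < 1 then 0
  else if Even (⌊d⌋ + (m : ℤ)) then (⌊d⌋ : ℝ)
  else d - 1

open Classical in
noncomputable def stepB (m : ℕ) (d : ℝ) : ℝ :=
  if d ≤ 0 then d
  else if ((m : ℝ) + 1) < d then d
  else if ∃ z : ℤ, d = (z : ℝ) then d + 1
  else if Odd m ∧ d < 1 then 1
  else if Even (⌊d⌋ + (m : ℤ)) then d + 1
  else (⌈d⌉ : ℝ)

lemma fract_pos_of_not_int {d : ℝ} (h : ¬ ∃ z : ℤ, d = (z : ℝ)) : 0 < Int.fract d := by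
  rcases lt_or_eq_of_le (Int.fract_nonneg d) with h' | h'
  · exact h'
  · exfalso; exact h ⟨⌊d⌋, by have := Int.floor_add_fract d; linarith⟩

lemma D_of_nonpos {m : ℕ} {d : ℝ} (h : d ≤ 0) : D m d = 1 := by
  cases m with
  | zero => simp [D, h]
  | succ k => simp [D, h]

lemma D_of_gt {m : ℕ} {d : ℝ} (h : (m : ℝ) < d) : D m d = 0 := by
  cases m with
  | zero => simp only [D]; rw [if_neg (by push_cast at h ⊢; linarith)]
  | succ k =>
    simp only [D]
    rw [if_neg (by push_cast at h ⊢; linarith), if_pos (by push_cast at h ⊢; linarith)]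

lemma stepP_nonneg (m : ℕ) (d : ℝ) : 0 ≤ stepP m d := by
  unfold stepP
  split_ifs with h1 h2 h3 h4 h5
  · norm_num
  · norm_num
  · norm_num
  · linarith [h4.2]
  · have h0 := Int.fract_nonneg d
    apply div_nonneg <;> linarith
  · have h0 := Int.fract_nonneg d
    have h1' := Int.fract_lt_one d
    apply div_nonneg <;> linarith

lemma stepP_le_one (m : ℕ) (d : ℝ) : stepP m d ≤ 1 := by
  unfold stepP
  split_ifs with h1 h2 h3 h4 h5
  · norm_num
  · norm_num
  · norm_num
  · push_neg at h1; linarith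
  · rw [div_le_one (by linarith [Int.fract_nonneg d])]
    linarith [Int.fract_nonneg d]
  · rw [div_le_one (by linarith [Int.fract_lt_one d])]
    linarith [Int.fract_nonneg d]

lemma step_mean (m : ℕ) (d : ℝ) :
    stepP m d * stepA m d + (1 - stepP m d) * stepB m d = d := by
  unfold stepP stepA stepB
  split_ifs with h1 h2 h3 h4 h5
  · ring
  · ring
  · ring
  · ring
  · have hfl : (⌊d⌋ : ℝ) + Int.fract d = d := Int.floor_add_fract d
    have h0 := Int.fract_nonneg d
    have hne : (1 : ℝ) + Int.fract d ≠ 0 := by linarith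
    field_simp
    nlinarith [hfl]
  · have hc : (⌈d⌉ : ℝ) = d + 1 - Int.fract d := by
      have := Int.ceil_sub_self_eq (a := d) (ne_of_gt (fract_pos_of_not_int h3))
      linarith
    have h1' := Int.fract_lt_one d
    have hne : (2 : ℝ) - Int.fract d ≠ 0 := by linarith
    rw [hc]
    field_simp
    ring

lemma step_jumpA (m : ℕ) (d : ℝ) : |stepA m d - d| ≤ 1 := by
  unfold stepA
  have h0 := Int.fract_nonneg d
  have h1' := Int.fract_lt_one d
  split_ifs with h1 h2 h3 h4 h5
  · simp
  · simp
  · simp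
  · rw [abs_le]; push_neg at h1; constructor <;> [linarith [h4.2]; linarith]
  · have hfl : (⌊d⌋ : ℝ) + Int.fract d = d := Int.floor_add_fract d
    rw [abs_le]; constructor <;> linarith
  · simp

lemma step_jumpB (m : ℕ) (d : ℝ) : |stepB m d - d| ≤ 1 := by
  unfold stepB
  have h0 := Int.fract_nonneg d
  have h1' := Int.fract_lt_one d
  split_ifs with h1 h2 h3 h4 h5
  · simp
  · simp
  · simp
  · rw [abs_le]; push_neg at h1; constructor <;> [linarith; linarith [h4.2]]
  · simp
  · have hc : (⌈d⌉ : ℝ) = d + 1 - Int.fract d := by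
      have := Int.ceil_sub_self_eq (a := d) (ne_of_gt (fract_pos_of_not_int h3))
      linarith
    rw [hc, abs_le]; constructor <;> linarith

lemma step_stay {m : ℕ} {d : ℝ} (h : d ≤ 0) : stepA m d = d ∧ stepB m d = d := by
  unfold stepA stepB; rw [if_pos h, if_pos h]; exact ⟨rfl, rfl⟩

lemma D_step (m : ℕ) (d : ℝ) :
    D (m + 1) d = stepP m d * D m (stepA m d) + (1 - stepP m d) * D m (stepB m d) := by
  simp only [D]
  unfold stepP stepA stepB
  split_ifs with h1 h2 h3 h4 h5
  · rw [D_of_nonpos h1]; ring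
  · rw [D_of_gt (show (m:ℝ) < d by linarith)]; ring
  · ring
  · ring
  · have h0 := Int.fract_nonneg d
    have this1 : (1 : ℝ) - 1 / (1 + Int.fract d) = Int.fract d / (1 + Int.fract d) := by
      have hne : (1 : ℝ) + Int.fract d ≠ 0 := by linarith
      field_simp
      ring
    rw [this1]
  · have h1' := Int.fract_lt_one d
    have this1 : (1 : ℝ) - (1 - Int.fract d) / (2 - Int.fract d) = 1 / (2 - Int.fract d) := by
      have hne : (2 : ℝ) - Int.fract d ≠ 0 := by linarith
      field_simp
      norm_num
    rw [this1]





abbrev Om : Type := ℕ → Bool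

noncomputable def V (n : ℕ) (x : ℝ) : ℕ → Om → ℝ
  | 0, _ => x
  | k+1, ω =>
    if k < n then
      (if ω k then stepA (n - 1 - k) (V n x k ω) else stepB (n - 1 - k) (V n x k ω))
    else V n x k ω

noncomputable def W (n : ℕ) (x : ℝ) : ℕ → Om → ℝ
  | 0, _ => 1
  | k+1, ω =>
    W n x k ω *
      (if k < n then
        (if ω k then stepP (n - 1 - k) (V n x k ω) else 1 - stepP (n - 1 - k) (V n x k ω))
      else 1)

def ext (k : ℕ) (p : Fin k → Bool) : Om := fun i => if h : i < k then p ⟨i, h⟩ else false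

lemma V_congr (n : ℕ) (x : ℝ) : ∀ (k : ℕ) (ω ω' : Om), (∀ i, i < k → ω i = ω' i) →
    V n x k ω = V n x k ω'
  | 0, _, _, _ => rfl
  | k+1, ω, ω', h => by
    have hk : V n x k ω = V n x k ω' := V_congr n x k ω ω' fun i hi => h i (hi.trans (Nat.lt_succ_self k))
    simp only [V, hk, h k (Nat.lt_succ_self k)]

lemma W_congr (n : ℕ) (x : ℝ) : ∀ (k : ℕ) (ω ω' : Om), (∀ i, i < k → ω i = ω' i) →
    W n x k ω = W n x k ω'
  | 0, _, _, _ => rfl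
  | k+1, ω, ω', h => by
    have hk : W n x k ω = W n x k ω' := W_congr n x k ω ω' fun i hi => h i (hi.trans (Nat.lt_succ_self k))
    have hv : V n x k ω = V n x k ω' := V_congr n x k ω ω' fun i hi => h i (hi.trans (Nat.lt_succ_self k))
    simp only [W, hk, hv, h k (Nat.lt_succ_self k)]

lemma V_stay (n : ℕ) (x : ℝ) {k : ℕ} {ω : Om} (h : V n x k ω ≤ 0) :
    ∀ j, k ≤ j → V n x j ω = V n x k ω := by
  intro j hj
  induction j, hj using Nat.le_induction with
  | base => rfl
  | succ j hj ih =>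
    have h' : V n x j ω ≤ 0 := by rw [ih]; exact h
    simp only [V, ih]
    rcases step_stay (m := n - 1 - j) h' with ⟨hA, hB⟩
    rw [ih] at hA hB
    split_ifs <;> simp [hA, hB, ih]

lemma ext_lt {k : ℕ} (p : Fin k → Bool) {i : ℕ} (h : i < k) : ext k p i = p ⟨i, h⟩ := by
  simp [ext, h]

lemma ext_snoc_lt {j : ℕ} (p : Fin j → Bool) (b : Bool) {i : ℕ} (h : i < j) :
    ext (j+1) (Fin.snoc p b) i = ext j p i := by
  rw [ext_lt _ (h.trans (Nat.lt_succ_self j)), ext_lt _ h]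
  have : (⟨i, h.trans (Nat.lt_succ_self j)⟩ : Fin (j+1)) = Fin.castSucc ⟨i, h⟩ := rfl
  rw [this, Fin.snoc_castSucc]

lemma ext_snoc_last {j : ℕ} (p : Fin j → Bool) (b : Bool) :
    ext (j+1) (Fin.snoc p b) j = b := by
  rw [ext_lt _ (Nat.lt_succ_self j)]
  have : (⟨j, Nat.lt_succ_self j⟩ : Fin (j+1)) = Fin.last j := rfl
  rw [this, Fin.snoc_last]

lemma V_ext_snoc (n : ℕ) (x : ℝ) {j k : ℕ} (hk : k ≤ j) (p : Fin j → Bool) (b : Bool) :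
    V n x k (ext (j+1) (Fin.snoc p b)) = V n x k (ext j p) :=
  V_congr n x k _ _ fun i hi => ext_snoc_lt p b (hi.trans_le hk)

lemma W_ext_snoc (n : ℕ) (x : ℝ) {j k : ℕ} (hk : k ≤ j) (p : Fin j → Bool) (b : Bool) :
    W n x k (ext (j+1) (Fin.snoc p b)) = W n x k (ext j p) :=
  W_congr n x k _ _ fun i hi => ext_snoc_lt p b (hi.trans_le hk)

lemma sum_snoc {j : ℕ} (F : (Fin (j+1) → Bool) → ℝ) :
    ∑ q : Fin (j+1) → Bool, F q
      = ∑ p : Fin j → Bool, (F (Fin.snoc p true) + F (Fin.snoc p false)) := by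
  rw [← Equiv.sum_comp (Fin.snocEquiv (fun _ => Bool)) F]
  rw [Fintype.sum_prod_type_right]
  congr 1
  ext p
  simp [Fin.snocEquiv]

/-- One step of the expectation recursion. -/
lemma step_sum (n : ℕ) (x : ℝ) {j : ℕ} (hj : j < n) (h : Om → ℝ) :
    ∑ q : Fin (j+1) → Bool, W n x (j+1) (ext (j+1) q) * h (ext (j+1) q)
      = ∑ p : Fin j → Bool, W n x j (ext j p) *
          (stepP (n - 1 - j) (V n x j (ext j p)) * h (ext (j+1) (Fin.snoc p true))
            + (1 - stepP (n - 1 - j) (V n x j (ext j p))) * h (ext (j+1) (Fin.snoc p false))) := by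
  rw [sum_snoc]
  refine Finset.sum_congr rfl fun p _ => ?_
  have hWt := W_ext_snoc n x le_rfl p true
  have hWf := W_ext_snoc n x le_rfl p false
  have hVt := V_ext_snoc n x le_rfl p true
  have hVf := V_ext_snoc n x le_rfl p false
  simp only [W, hWt, hWf, hVt, hVf, ext_snoc_last, if_pos hj, if_true, Bool.false_eq_true, if_false]
  ring












lemma W_nonneg (n : ℕ) (x : ℝ) : ∀ (k : ℕ) (ω : Om), 0 ≤ W n x k ω
  | 0, _ => zero_le_one
  | k+1, ω => by
    have h := W_nonneg n x k ω
    simp only [W]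
    apply mul_nonneg h
    split_ifs
    · exact stepP_nonneg _ _
    · linarith [stepP_le_one (n - 1 - k) (V n x k ω)]
    · exact zero_le_one

lemma sum_base (n : ℕ) (x : ℝ) (h : Om → ℝ) :
    ∑ p : Fin 0 → Bool, W n x 0 (ext 0 p) * h (ext 0 p) = h (ext 0 fun i => i.elim0) := by
  rw [Fintype.sum_subsingleton _ (fun i : Fin 0 => i.elim0)]
  simp only [W, one_mul]

lemma sum_reduce (n : ℕ) (x : ℝ) (k : ℕ) (h : Om → ℝ)
    (hdep : ∀ ω ω' : Om, (∀ i, i < k → ω i = ω' i) → h ω = h ω') :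
    ∀ j, k ≤ j → j ≤ n →
      ∑ q : Fin j → Bool, W n x j (ext j q) * h (ext j q)
        = ∑ p : Fin k → Bool, W n x k (ext k p) * h (ext k p) := by
  intro j hkj hjn
  induction j, hkj using Nat.le_induction with
  | base => rfl
  | succ j hkj ih =>
    have hj : j < n := hjn
    rw [step_sum n x hj h]
    rw [← ih (le_of_lt hj)]
    refine Finset.sum_congr rfl fun p _ => ?_
    have ht : h (ext (j+1) (Fin.snoc p true)) = h (ext j p) :=
      hdep _ _ fun i hi => ext_snoc_lt p true (hi.trans_le hkj)
    have hf : h (ext (j+1) (Fin.snoc p false)) = h (ext j p) :=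
      hdep _ _ fun i hi => ext_snoc_lt p false (hi.trans_le hkj)
    rw [ht, hf]; ring

lemma V_snoc_eq (n : ℕ) (x : ℝ) {k : ℕ} (hk : k < n) (p : Fin k → Bool) (b : Bool) :
    V n x (k+1) (ext (k+1) (Fin.snoc p b)) =
      if b then stepA (n - 1 - k) (V n x k (ext k p))
      else stepB (n - 1 - k) (V n x k (ext k p)) := by
  simp only [V, if_pos hk, ext_snoc_last, V_ext_snoc n x le_rfl]

lemma sum_D (n : ℕ) (x : ℝ) : ∀ k, k ≤ n →
    ∑ p : Fin k → Bool, W n x k (ext k p) * D (n - k) (V n x k (ext k p)) = D n x := by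
  intro k
  induction k with
  | zero =>
    intro _
    rw [sum_base n x (fun ω => D (n - 0) (V n x 0 ω))]
    simp only [V, Nat.sub_zero]
  | succ k ih =>
    intro hk1
    have hk : k < n := hk1
    rw [step_sum n x hk (fun ω => D (n - (k+1)) (V n x (k+1) ω))]
    rw [← ih (le_of_lt hk)]
    refine Finset.sum_congr rfl fun p _ => ?_
    rw [V_snoc_eq n x hk p true, V_snoc_eq n x hk p false]
    simp only [if_true, Bool.false_eq_true, if_false]
    have e1 : n - (k+1) = n - 1 - k := by omega
    have e2 : n - k = (n - 1 - k) + 1 := by omega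
    rw [e1, e2, D_step (n - 1 - k) (V n x k (ext k p))]

lemma mart_step (n : ℕ) (x : ℝ) (i : ℕ) (g : Om → ℝ)
    (hdep : ∀ ω ω' : Om, (∀ l, l < i → ω l = ω' l) → g ω = g ω') :
    ∑ p : Fin n → Bool, W n x n (ext n p) * (g (ext n p) * V n x (i+1) (ext n p))
      = ∑ p : Fin n → Bool, W n x n (ext n p) * (g (ext n p) * V n x i (ext n p)) := by
  by_cases hi : i < n
  · have hdep2 : ∀ ω ω' : Om, (∀ l, l < i + 1 → ω l = ω' l) →
        g ω * V n x (i+1) ω = g ω' * V n x (i+1) ω' := by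
      intro ω ω' hag
      rw [hdep ω ω' fun l hl => hag l (hl.trans (Nat.lt_succ_self i)),
        V_congr n x (i+1) ω ω' hag]
    have hdep1 : ∀ ω ω' : Om, (∀ l, l < i + 1 → ω l = ω' l) →
        g ω * V n x i ω = g ω' * V n x i ω' := by
      intro ω ω' hag
      rw [hdep ω ω' fun l hl => hag l (hl.trans (Nat.lt_succ_self i)),
        V_congr n x i ω ω' fun l hl => hag l (hl.trans (Nat.lt_succ_self i))]
    rw [sum_reduce n x (i+1) (fun ω => g ω * V n x (i+1) ω) hdep2 n hi le_rfl,
      sum_reduce n x (i+1) (fun ω => g ω * V n x i ω) hdep1 n hi le_rfl,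
      step_sum n x hi (fun ω => g ω * V n x (i+1) ω),
      step_sum n x hi (fun ω => g ω * V n x i ω)]
    refine Finset.sum_congr rfl fun p _ => ?_
    have hgt : g (ext (i+1) (Fin.snoc p true)) = g (ext i p) :=
      hdep _ _ fun l hl => ext_snoc_lt p true hl
    have hgf : g (ext (i+1) (Fin.snoc p false)) = g (ext i p) :=
      hdep _ _ fun l hl => ext_snoc_lt p false hl
    have hVt : V n x i (ext (i+1) (Fin.snoc p true)) = V n x i (ext i p) :=
      V_ext_snoc n x le_rfl p true
    have hVf : V n x i (ext (i+1) (Fin.snoc p false)) = V n x i (ext i p) :=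
      V_ext_snoc n x le_rfl p false
    rw [V_snoc_eq n x hi p true, V_snoc_eq n x hi p false]
    simp only [if_true, Bool.false_eq_true, if_false, hgt, hgf, hVt, hVf]
    have := step_mean (n - 1 - i) (V n x i (ext i p))
    linear_combination (W n x i (ext i p) * g (ext i p)) * this
  · have hVeq : ∀ ω : Om, V n x (i+1) ω = V n x i ω := fun ω => by
      simp only [V, if_neg hi]
    simp only [hVeq]

lemma sum_W_one (n : ℕ) (x : ℝ) :
    ∑ p : Fin n → Bool, W n x n (ext n p) = 1 := by
  have := sum_reduce n x 0 (fun _ => 1) (fun _ _ _ => rfl) n (Nat.zero_le n) le_rfl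
  simp only [mul_one] at this
  rw [this, Fintype.sum_subsingleton _ (fun i : Fin 0 => i.elim0)]
  simp only [W]


lemma D_zero_nonneg (v : ℝ) : 0 ≤ D 0 v := by
  by_cases h : v ≤ 0 <;> simp [D, h]

end MGAux

open MGAux

/-- the bound `D_n(x)` is attained: there is a probability space, a
filtration and a bounded-difference martingale starting at `0` whose probability of
visiting `[x, ∞)` within `n` steps equals `D_n(x)`. -/
theorem exists_martingale_visit_prob_eq (n : ℕ) (x : ℝ) :
    ∃ (Ω : Type) (mΩ : MeasurableSpace Ω) (μ : Measure Ω) (_ : IsProbabilityMeasure μ)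
      (ℱ : Filtration ℕ mΩ) (M : ℕ → Ω → ℝ),
      Martingale M ℱ μ ∧
      (∀ᵐ ω ∂μ, M 0 ω = 0) ∧
      (∀ k : ℕ, ∀ᵐ ω ∂μ, |M (k + 1) ω - M k ω| ≤ 1) ∧
      (μ {ω | ∃ k ≤ n, x ≤ M k ω}).toReal = D n x := by
  classical
  letI mOm : MeasurableSpace Om := ⊤
  haveI msc : MeasurableSingletonClass Om := ⟨fun _ => MeasurableSpace.measurableSet_top⟩
  set μ : Measure Om :=
    ∑ p : Fin n → Bool, (ENNReal.ofReal (W n x n (ext n p))) • Measure.dirac (ext n p) with hμdef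
  have hIntD : ∀ (g : Om → ℝ) (p : Fin n → Bool),
      Integrable g ((ENNReal.ofReal (W n x n (ext n p))) • Measure.dirac (ext n p)) := by
    intro g p
    refine Integrable.smul_measure ?_ ENNReal.ofReal_ne_top
    refine ⟨(measurable_from_top (f := g)).aestronglyMeasurable, ?_⟩
    show (∫⁻ a, ‖g a‖₊ ∂Measure.dirac (ext n p)) < ⊤
    rw [lintegral_dirac]
    exact ENNReal.coe_lt_top
  have hInt : ∀ g : Om → ℝ, Integrable g μ := by
    intro g
    rw [hμdef]
    exact integrable_finset_sum_measure.mpr fun p _ => hIntD g p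
  have hIg : ∀ g : Om → ℝ,
      ∫ ω, g ω ∂μ = ∑ p : Fin n → Bool, W n x n (ext n p) * g (ext n p) := by
    intro g
    rw [hμdef, integral_finset_sum_measure fun p _ => hIntD g p]
    refine Finset.sum_congr rfl fun p _ => ?_
    rw [integral_smul_measure, integral_dirac, ENNReal.toReal_ofReal (W_nonneg n x n _),
      smul_eq_mul]
  have hμapp : ∀ s : Set Om,
      μ s = ∑ p : Fin n → Bool, ENNReal.ofReal (W n x n (ext n p)) * s.indicator 1 (ext n p) := by
    intro s
    rw [hμdef, Measure.finset_sum_apply]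
    exact Finset.sum_congr rfl fun p _ => by rw [Measure.smul_apply, Measure.dirac_apply,
      smul_eq_mul]
  haveI hprob : IsProbabilityMeasure μ := by
    constructor
    rw [hμapp Set.univ]
    simp only [Set.indicator_univ, Pi.one_apply, mul_one]
    rw [← ENNReal.ofReal_sum_of_nonneg fun p _ => W_nonneg n x n (ext n p), sum_W_one n x,
      ENNReal.ofReal_one]
  set mask : ℕ → Om → Om := fun k ω i => if i < k then ω i else false with hmask
  have mask_agree : ∀ (k : ℕ) (ω : Om) (i : ℕ), i < k → mask k ω i = ω i := by
    intro k ω i hi; simp [hmask, hi]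
  have mask_mask : ∀ {k l : ℕ}, k ≤ l → ∀ ω : Om, mask k (mask l ω) = mask k ω := by
    intro k l hkl ω
    funext i
    by_cases hik : i < k
    · simp [hmask, hik, hik.trans_le hkl]
    · simp [hmask, hik]
  have Fmono : Monotone (fun k => MeasurableSpace.comap (mask k) (⊤ : MeasurableSpace Om)) := by
    intro k l hkl
    have hckl : mask k = (mask k) ∘ (mask l) := funext fun ω => (mask_mask hkl ω).symm
    calc MeasurableSpace.comap (mask k) (⊤ : MeasurableSpace Om)
        = MeasurableSpace.comap (mask k ∘ mask l) ⊤ := by rw [← hckl]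
      _ = (MeasurableSpace.comap (mask k) ⊤).comap (mask l) := MeasurableSpace.comap_comp.symm
      _ ≤ MeasurableSpace.comap (mask l) ⊤ := MeasurableSpace.comap_mono le_top
  set F : Filtration ℕ mOm :=
    ⟨fun k => MeasurableSpace.comap (mask k) ⊤, Fmono, fun k => le_top⟩ with hF
  set M : ℕ → Om → ℝ := fun k ω => x - V n x k ω with hM
  have hMeasF : ∀ k, StronglyMeasurable[F k] (M k) := by
    intro k
    have hfac : M k = (fun ω => x - V n x k ω) ∘ (mask k) := by
      funext ω
      simp only [hM, Function.comp_apply]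
      rw [V_congr n x k (mask k ω) ω fun i hi => mask_agree k ω i hi]
    rw [hfac]
    have h1 : @Measurable Om Om (F k) mOm (mask k) := Measurable.of_comap_le le_rfl
    exact ((measurable_from_top (f := fun ω => x - V n x k ω)).comp h1).stronglyMeasurable
  have hAdapted : StronglyAdapted F M := fun k => hMeasF k
  have hkey : ∀ i : ℕ, M i =ᵐ[μ] μ[M (i+1) | F i] := by
    intro i
    refine ae_eq_condExp_of_forall_setIntegral_eq (F.le i) (hInt (M (i+1)))
      (fun s _ _ => (hInt (M i)).integrableOn) (fun s hs _ => ?_)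
      (StronglyMeasurable.aestronglyMeasurable (hMeasF i))
    have hs' : MeasurableSet[MeasurableSpace.comap (mask i) ⊤] s := hs
    obtain ⟨t, -, rfl⟩ := MeasurableSpace.measurableSet_comap.mp hs'
    have hsm : MeasurableSet (mask i ⁻¹' t) := MeasurableSpace.measurableSet_top
    set g : Om → ℝ := (mask i ⁻¹' t).indicator (fun _ => (1:ℝ)) with hg
    have hind : ∀ (f : Om → ℝ) (ω : Om), (mask i ⁻¹' t).indicator f ω = g ω * f ω := by
      intro f ω
      by_cases hω : ω ∈ mask i ⁻¹' t
      · simp [hg, Set.indicator_of_mem hω]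
      · simp [hg, Set.indicator_of_notMem hω]
    rw [← integral_indicator hsm, ← integral_indicator hsm, hIg, hIg]
    simp only [hind]
    have hgdep : ∀ ω ω' : Om, (∀ l, l < i → ω l = ω' l) → g ω = g ω' := by
      intro ω ω' hag
      have hmeq : mask i ω = mask i ω' := by
        funext l
        by_cases hl : l < i
        · simp [hmask, hl, hag l hl]
        · simp [hmask, hl]
      have hmem : (ω ∈ mask i ⁻¹' t) ↔ (ω' ∈ mask i ⁻¹' t) := by
        simp [Set.mem_preimage, hmeq]
      by_cases h1 : ω ∈ mask i ⁻¹' t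
      · rw [hg]; rw [Set.indicator_of_mem h1, Set.indicator_of_mem (hmem.mp h1)]
      · rw [hg]; rw [Set.indicator_of_notMem h1, Set.indicator_of_notMem fun hc =>
          h1 (hmem.mpr hc)]
    have hV := mart_step n x i g hgdep
    have expand : ∀ j : ℕ,
        (∑ p : Fin n → Bool, W n x n (ext n p) * (g (ext n p) * M j (ext n p)))
          = (∑ p : Fin n → Bool, W n x n (ext n p) * (g (ext n p) * x))
            - ∑ p : Fin n → Bool, W n x n (ext n p) * (g (ext n p) * V n x j (ext n p)) := by
      intro j
      rw [← Finset.sum_sub_distrib]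
      exact Finset.sum_congr rfl fun p _ => by simp only [hM]; ring
    rw [expand i, expand (i+1), hV]
  have hMart : Martingale M F μ := martingale_nat hAdapted (fun i => hInt _) hkey
  refine ⟨Om, mOm, μ, hprob, F, M, hMart, ?_, ?_, ?_⟩
  · refine ae_of_all μ fun ω => ?_
    simp only [hM, V]
    exact sub_self x
  · intro k
    refine ae_of_all μ fun ω => ?_
    have hdiff : M (k+1) ω - M k ω = -(V n x (k+1) ω - V n x k ω) := by
      simp only [hM]; ring
    rw [hdiff, abs_neg]
    by_cases hk : k < n
    · simp only [V, if_pos hk]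
      cases hω : ω k
      · simp only [Bool.false_eq_true, if_false]
        exact step_jumpB _ _
      · simp only [if_true]
        exact step_jumpA _ _
    · simp only [V, if_neg hk, sub_self, abs_zero]
      exact zero_le_one
  · have hset : {ω : Om | ∃ k ≤ n, x ≤ M k ω} = {ω : Om | V n x n ω ≤ 0} := by
      ext ω
      simp only [Set.mem_setOf_eq]
      constructor
      · rintro ⟨k, hkn, hxk⟩
        have hMk : M k ω = x - V n x k ω := rfl
        have hVk : V n x k ω ≤ 0 := by rw [hMk] at hxk; linarith
        rw [V_stay n x hVk n hkn]
        exact hVk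
      · intro h
        refine ⟨n, le_rfl, ?_⟩
        have hMn : M n ω = x - V n x n ω := rfl
        rw [hMn]; linarith
    rw [hset, hμapp]
    have hterm : ∀ p : Fin n → Bool,
        ENNReal.ofReal (W n x n (ext n p)) * ({ω : Om | V n x n ω ≤ 0}.indicator 1 (ext n p))
          = ENNReal.ofReal (W n x n (ext n p) * D 0 (V n x n (ext n p))) := by
      intro p
      by_cases hv : V n x n (ext n p) ≤ 0
      · have hmem : ext n p ∈ {ω : Om | V n x n ω ≤ 0} := hv
        rw [Set.indicator_of_mem hmem, show D 0 (V n x n (ext n p)) = 1 from by simp [D, hv]]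
        simp
      · have hmem : ext n p ∉ {ω : Om | V n x n ω ≤ 0} := hv
        rw [Set.indicator_of_notMem hmem, show D 0 (V n x n (ext n p)) = 0 from by
          simp [D, hv]]
        simp
    have hnn : ∀ p : Fin n → Bool, 0 ≤ W n x n (ext n p) * D 0 (V n x n (ext n p)) :=
      fun p => mul_nonneg (W_nonneg n x n _) (D_zero_nonneg _)
    have hDsum := sum_D n x n le_rfl
    rw [Nat.sub_self] at hDsum
    have hDnn : 0 ≤ D n x := hDsum ▸ Finset.sum_nonneg fun p _ => hnn p
    simp only [hterm]
    rw [← ENNReal.ofReal_sum_of_nonneg fun p _ => hnn p, hDsum, ENNReal.toReal_ofReal hDnn]
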